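/- There exists a universal constant C > 0 such that for every Brjuno number x (i.e. B(x) < +∞), |B(x) − ∑_{n≥0} (log q_{n+1})/q_n| ≤ C, where q_n are the denominators of the convergents of x. -/

import Mathlib

/-- Gauss map iterates of `x`: `y₀ = {x}`, `y_{n+1} = {1/y_n}`. -/
noncomputable def gIter (x : ℝ) : ℕ → ℝ
  | 0 => Int.fract x
  | n + 1 => Int.fract (1 / gIter x n)

/-- Partial quotients of the continued fraction of `x`. -/
noncomputable def cfa (x : ℝ) : ℕ → ℤ
  | 0 => ⌊x⌋
  | n + 1 => ⌊1 / gIter x n⌋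

/-- Numerators of the convergents of `x`. -/
noncomputable def cfp (x : ℝ) : ℕ → ℤ
  | 0 => cfa x 0
  | 1 => cfa x 1 * cfa x 0 + 1
  | n + 2 => cfa x (n + 2) * cfp x (n + 1) + cfp x n

/-- Denominators of the convergents of `x`. -/
noncomputable def cfq (x : ℝ) : ℕ → ℤ
  | 0 => 1
  | 1 => cfa x 1
  | n + 2 => cfa x (n + 2) * cfq x (n + 1) + cfq x n

/-- The Brjuno function `B(x) = ∑_{n≥0} β_{n-1} log(1/x_n)`, with values in `(0,+∞]`. -/
noncomputable def brjuno (x : ℝ) : ENNReal :=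
  ∑' n : ℕ, ENNReal.ofReal
    ((∏ i ∈ Finset.range n, gIter x i) * Real.log (1 / gIter x n))

namespace Brj

variable {x : ℝ}

theorem g_irr (hx : Irrational x) : ∀ n, Irrational (gIter x n)
  | 0 => by
    have : Int.fract x = x - ⌊x⌋ := rfl
    show Irrational (Int.fract x)
    rw [this]; exact hx.sub_intCast ⌊x⌋
  | n + 1 => by
    have h : Irrational (1 / gIter x n) := by simpa [one_div] using (g_irr hx n).inv
    have : Int.fract (1 / gIter x n) = 1 / gIter x n - ⌊1 / gIter x n⌋ := rfl
    show Irrational (Int.fract (1 / gIter x n))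
    rw [this]; exact h.sub_intCast _

theorem oneDivIrr (hx : Irrational x) (n : ℕ) : Irrational (1 / gIter x n) := by
  simpa [one_div] using (g_irr hx n).inv

theorem g_pos (hx : Irrational x) (n : ℕ) : 0 < gIter x n := by
  cases n with
  | zero => exact Int.fract_pos.mpr (hx.ne_int ⌊x⌋)
  | succ m => exact Int.fract_pos.mpr ((oneDivIrr hx m).ne_int _)

theorem g_lt_one (_hx : Irrational x) (n : ℕ) : gIter x n < 1 := by
  cases n with
  | zero => exact Int.fract_lt_one x
  | succ m => exact Int.fract_lt_one _

theorem one_lt_inv_g (hx : Irrational x) (n : ℕ) : 1 < 1 / gIter x n :=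
  (one_lt_div (g_pos hx n)).mpr (g_lt_one hx n)

theorem a_eq (n : ℕ) : (cfa x (n + 1) : ℝ) + gIter x (n + 1) = 1 / gIter x n := by
  show (⌊1 / gIter x n⌋ : ℝ) + Int.fract (1 / gIter x n) = 1 / gIter x n
  exact Int.floor_add_fract _

theorem a_pos (hx : Irrational x) (n : ℕ) : 1 ≤ cfa x (n + 1) := by
  show 1 ≤ ⌊1 / gIter x n⌋
  exact Int.le_floor.mpr (by exact_mod_cast (one_lt_inv_g hx n).le)

theorem q_pos (hx : Irrational x) : ∀ n, 1 ≤ cfq x n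
  | 0 => le_refl _
  | 1 => a_pos hx 0
  | n + 2 => by
    have h1 := q_pos hx (n + 1)
    have h2 := q_pos hx n
    have h3 := a_pos hx (n + 1)
    show 1 ≤ cfa x (n + 2) * cfq x (n + 1) + cfq x n
    nlinarith

theorem q_mono (hx : Irrational x) : ∀ n, cfq x n ≤ cfq x (n + 1)
  | 0 => a_pos hx 0
  | n + 1 => by
    have h1 := q_pos hx n
    have h2 := q_pos hx (n + 1)
    have h3 := a_pos hx (n + 1)
    show cfq x (n+1) ≤ cfa x (n + 2) * cfq x (n + 1) + cfq x n
    nlinarith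

theorem q_two (hx : Irrational x) (n : ℕ) : 2 * cfq x n ≤ cfq x (n + 2) := by
  have h1 := q_pos hx n
  have h2 := q_pos hx (n + 1)
  have h3 := a_pos hx (n + 1)
  have h4 := q_mono hx n
  show 2 * cfq x n ≤ cfa x (n + 2) * cfq x (n + 1) + cfq x n
  nlinarith

theorem q_ge_pow (hx : Irrational x) : ∀ n, (2:ℤ) ^ (n / 2) ≤ cfq x n
  | 0 => le_refl _
  | 1 => by simpa using q_pos hx 1
  | n + 2 => by
    have h := q_ge_pow hx n
    have h2 := q_two hx n
    have : (n + 2) / 2 = n / 2 + 1 := by omega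
    rw [this, pow_succ]
    nlinarith [pow_pos (show (0:ℤ) < 2 by norm_num) (n/2)]

end Brj

namespace Brj

noncomputable def bet (x : ℝ) (n : ℕ) : ℝ := ∏ i ∈ Finset.range n, gIter x i

theorem bet_succ (n : ℕ) : bet x (n + 1) = bet x n * gIter x n :=
  Finset.prod_range_succ _ _

theorem bet_pos (hx : Irrational x) (n : ℕ) : 0 < bet x n :=
  Finset.prod_pos fun i _ => g_pos hx i

theorem keyA (hx : Irrational x) :
    ∀ n, bet x (n + 1) * (cfq x (n + 1) : ℝ) + bet x (n + 2) * (cfq x n : ℝ) = 1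
  | 0 => by
    have ha := a_eq (x := x) 0
    have hg : gIter x 0 ≠ 0 := (g_pos hx 0).ne'
    have h : ((cfa x 1 : ℝ) + gIter x 1) * gIter x 0 = 1 := by
      rw [ha]; field_simp
    show bet x 1 * (cfq x 1 : ℝ) + bet x 2 * (cfq x 0 : ℝ) = 1
    have e1 : bet x 1 = gIter x 0 := by simp [bet]
    have e2 : bet x 2 = gIter x 0 * gIter x 1 := by
      simp [bet, Finset.prod_range_succ]
    have e3 : cfq x 1 = cfa x 1 := rfl
    have e4 : cfq x 0 = 1 := rfl
    rw [e1, e2, e3, e4]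
    push_cast
    linear_combination h
  | n + 1 => by
    have IH := keyA hx n
    have ha := a_eq (x := x) (n + 1)
    have hg : gIter x (n + 1) ≠ 0 := (g_pos hx (n + 1)).ne'
    have h : ((cfa x (n + 2) : ℝ) + gIter x (n + 2)) * gIter x (n + 1) = 1 := by
      rw [ha]; field_simp
    have e2 : bet x (n + 2) = bet x (n + 1) * gIter x (n + 1) := bet_succ _
    have e3 : bet x (n + 3) = bet x (n + 2) * gIter x (n + 2) := bet_succ _
    have e4 : (cfq x (n + 2) : ℝ) = (cfa x (n + 2) : ℝ) * (cfq x (n + 1) : ℝ) + (cfq x n : ℝ) := by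
      show ((cfa x (n+2) * cfq x (n+1) + cfq x n : ℤ) : ℝ) = _
      push_cast; ring
    show bet x (n + 2) * (cfq x (n + 2) : ℝ) + bet x (n + 3) * (cfq x (n + 1) : ℝ) = 1
    rw [e4, e3, e2]
    linear_combination (bet x (n + 1) * (cfq x (n + 1) : ℝ)) * h + IH - (cfq x n : ℝ) * e2

end Brj

namespace Brj

theorem qR_pos (hx : Irrational x) (n : ℕ) : (1:ℝ) ≤ (cfq x n : ℝ) := by
  exact_mod_cast q_pos hx n

theorem qR_mono (hx : Irrational x) (n : ℕ) : (cfq x n : ℝ) ≤ (cfq x (n+1) : ℝ) := by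
  exact_mod_cast q_mono hx n

theorem betq_bounds (hx : Irrational x) :
    ∀ n, 1/2 < bet x n * (cfq x n : ℝ) ∧ bet x n * (cfq x n : ℝ) ≤ 1 := by
  intro n
  cases n with
  | zero => norm_num [bet, cfq]
  | succ m =>
    have key := keyA hx m
    have hb1 : 0 < bet x (m + 1) := bet_pos hx _
    have hb2 : 0 < bet x (m + 2) := bet_pos hx _
    have hq : (1:ℝ) ≤ (cfq x m : ℝ) := qR_pos hx m
    have hq1 : (1:ℝ) ≤ (cfq x (m+1) : ℝ) := qR_pos hx (m+1)
    have hqm : (cfq x m : ℝ) ≤ (cfq x (m+1) : ℝ) := qR_mono hx m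
    have hu : 0 ≤ bet x (m + 2) * (cfq x m : ℝ) := by positivity
    constructor
    · -- half bound
      have e : bet x (m + 2) = bet x (m + 1) * gIter x (m + 1) := bet_succ _
      have hg0 : 0 < gIter x (m+1) := g_pos hx _
      have hg1 : gIter x (m+1) < 1 := g_lt_one hx _
      -- u ≤ g * (b * q(m+1))
      have hle : bet x (m + 2) * (cfq x m : ℝ) ≤
          gIter x (m+1) * (bet x (m + 1) * (cfq x (m+1) : ℝ)) := by
        rw [e]; nlinarith
      nlinarith
    · linarith

theorem wq (hx : Irrational x) :
    ∀ n, |bet x n * (cfq x n : ℝ) - 1| ≤ gIter x n := by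
  intro n
  cases n with
  | zero => simp [bet, cfq]; exact (g_pos hx 0).le
  | succ m =>
    have key := keyA hx m
    have hb2 : 0 < bet x (m + 2) := bet_pos hx _
    have hq : (1:ℝ) ≤ (cfq x m : ℝ) := qR_pos hx m
    have hqm : (cfq x m : ℝ) ≤ (cfq x (m+1) : ℝ) := qR_mono hx m
    have hb1 : 0 < bet x (m + 1) := bet_pos hx _
    have hub := (betq_bounds hx (m+1)).2
    have e : bet x (m + 2) = bet x (m + 1) * gIter x (m + 1) := bet_succ _
    have hg0 : 0 < gIter x (m+1) := g_pos hx _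
    have : bet x (m+1) * (cfq x (m+1) : ℝ) - 1 = -(bet x (m+2) * (cfq x m : ℝ)) := by
      linarith
    rw [this, abs_neg, abs_of_nonneg (by positivity)]
    calc bet x (m+2) * (cfq x m : ℝ)
        = gIter x (m+1) * (bet x (m+1) * (cfq x m : ℝ)) := by rw [e]; ring
      _ ≤ gIter x (m+1) * 1 := by
          apply mul_le_mul_of_nonneg_left _ hg0.le
          nlinarith
      _ = gIter x (m+1) := mul_one _

theorem log_small {v : ℝ} (h1 : 1/2 < v) (h2 : v ≤ 1) : |Real.log v| ≤ Real.log 2 := by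
  rw [abs_le]
  constructor
  · have := Real.log_le_log (by norm_num : (0:ℝ) < 1/2) (le_of_lt h1)
    rwa [show (1:ℝ)/2 = 2⁻¹ by norm_num, Real.log_inv] at this
  · exact le_trans (Real.log_nonpos (by linarith) h2) (Real.log_nonneg one_le_two)

end Brj

namespace Brj

noncomputable def tfun (x : ℝ) (n : ℕ) : ℝ := bet x n * Real.log (1 / gIter x n)
noncomputable def sfun (x : ℝ) (n : ℕ) : ℝ := Real.log (cfq x (n+1) : ℝ) / (cfq x n : ℝ)

theorem term_bound (hx : Irrational x) (n : ℕ) :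
    |tfun x n - sfun x n| ≤ (1 + 2 * Real.log 2 + Real.log (cfq x n : ℝ)) / (cfq x n : ℝ) := by
  set g := gIter x n with hgdef
  set b := bet x n with hbdef
  set b' := bet x (n+1) with hb'def
  set q := (cfq x n : ℝ) with hqdef
  set q' := (cfq x (n+1) : ℝ) with hq'def
  have hg0 : 0 < g := g_pos hx n
  have hg1 : g < 1 := g_lt_one hx n
  have hb : 0 < b := bet_pos hx n
  have hb' : 0 < b' := bet_pos hx (n+1)
  have hq : 1 ≤ q := qR_pos hx n
  have hq' : 1 ≤ q' := qR_pos hx (n+1)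
  have hqpos : 0 < q := lt_of_lt_of_le one_pos hq
  have hq'pos : 0 < q' := lt_of_lt_of_le one_pos hq'
  set L := Real.log (1/g) with hLdef
  have hL0 : 0 ≤ L := Real.log_nonneg (((one_le_div hg0).mpr hg1.le))
  set A := Real.log (b * q) with hAdef
  set B := Real.log (b' * q') with hBdef
  have hA : |A| ≤ Real.log 2 := log_small (betq_bounds hx n).1 (betq_bounds hx n).2
  have hB : |B| ≤ Real.log 2 := log_small (betq_bounds hx (n+1)).1 (betq_bounds hx (n+1)).2
  have hlogq : 0 ≤ Real.log q := Real.log_nonneg hq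
  have he : b' = b * g := bet_succ n
  -- |(b*q - 1)*L| ≤ 1
  have hwq : |b * q - 1| ≤ g := wq hx n
  have hgL : g * L ≤ 1 - g := by
    have h1 : L ≤ 1/g - 1 := Real.log_le_sub_one_of_pos (by positivity)
    have h2 : g * (1/g) = 1 := by field_simp
    nlinarith
  have habs1 : |(b * q - 1) * L| ≤ 1 := by
    rw [abs_mul, abs_of_nonneg hL0]
    nlinarith [abs_nonneg (b*q - 1)]
  -- log identities
  have hA' : A = Real.log b + Real.log q := Real.log_mul hb.ne' hqpos.ne'
  have hB' : B = Real.log b' + Real.log q' := Real.log_mul hb'.ne' hq'pos.ne'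
  have hL' : L = Real.log b - Real.log b' := by
    rw [hLdef, show 1/g = b/b' by rw [he]; field_simp, Real.log_div hb.ne' hb'.ne']
  have hlogq' : Real.log q' = B - A + Real.log q + L := by
    rw [hB', hA', hL']; ring
  have hkey : tfun x n - sfun x n = ((b * q - 1) * L + A - B - Real.log q) / q := by
    show b * L - Real.log q' / q = _
    rw [hlogq']
    field_simp
    ring
  rw [hkey, abs_div, abs_of_pos hqpos]
  have hnum : |(b * q - 1) * L + A - B - Real.log q| ≤ 1 + 2 * Real.log 2 + Real.log q := by
    obtain ⟨a1, a2⟩ := abs_le.mp hA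
    obtain ⟨b1, b2⟩ := abs_le.mp hB
    obtain ⟨c1, c2⟩ := abs_le.mp habs1
    rw [abs_le]
    constructor <;> linarith
  exact (div_le_div_iff_of_pos_right hqpos).mpr hnum

end Brj

namespace Brj

noncomputable def cc : ℝ := Real.sqrt (Real.sqrt 2)

theorem one_lt_sqrt2 : (1:ℝ) < Real.sqrt 2 := by
  rw [show (1:ℝ) = Real.sqrt 1 by simp]
  exact Real.sqrt_lt_sqrt (by norm_num) (by norm_num)

theorem cc_gt_one : (1:ℝ) < cc := by
  rw [cc, show (1:ℝ) = Real.sqrt 1 by simp]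
  exact Real.sqrt_lt_sqrt (by norm_num) one_lt_sqrt2

theorem cc_pos : (0:ℝ) < cc := lt_trans one_pos cc_gt_one

theorem cc_sq : cc ^ 2 = Real.sqrt 2 := Real.sq_sqrt (Real.sqrt_nonneg 2)

theorem sqrt_two_pow (k : ℕ) : Real.sqrt ((2:ℝ) ^ k) = cc ^ (2 * k) := by
  rw [show (2:ℝ) ^ k = (Real.sqrt 2 ^ k) ^ 2 by
      rw [← pow_mul, mul_comm, pow_mul, Real.sq_sqrt (by norm_num : (0:ℝ) ≤ 2)],
    Real.sqrt_sq (pow_nonneg (Real.sqrt_nonneg 2) k), ← cc_sq, ← pow_mul, mul_comm]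

theorem inv_sqrtq_le (hx : Irrational x) (n : ℕ) :
    1 / Real.sqrt (cfq x n : ℝ) ≤ cc * (cc⁻¹) ^ n := by
  have hq : ((2:ℝ) ^ (n / 2) : ℝ) ≤ (cfq x n : ℝ) := by
    exact_mod_cast q_ge_pow hx n
  have hs : cc ^ (n - 1) ≤ Real.sqrt (cfq x n : ℝ) := by
    calc cc ^ (n - 1) ≤ cc ^ (2 * (n / 2)) :=
          pow_le_pow_right₀ cc_gt_one.le (by omega)
      _ = Real.sqrt ((2:ℝ) ^ (n / 2)) := (sqrt_two_pow _).symm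
      _ ≤ Real.sqrt (cfq x n : ℝ) := Real.sqrt_le_sqrt hq
  have hspos : 0 < Real.sqrt (cfq x n : ℝ) :=
    lt_of_lt_of_le (pow_pos cc_pos _) hs
  rw [div_le_iff₀ hspos]
  have hcn : cc ^ (n - 1) * (cc * cc⁻¹ ^ n) = cc ^ (n - 1 + 1) * cc⁻¹ ^ n := by ring
  have h1 : 1 ≤ cc ^ (n - 1) * (cc * cc⁻¹ ^ n) := by
    rw [hcn]
    cases n with
    | zero => simp; exact cc_gt_one.le
    | succ m =>
      have : m + 1 - 1 + 1 = m + 1 := rfl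
      rw [this, ← mul_pow, mul_inv_cancel₀ cc_pos.ne', one_pow]
  calc (1:ℝ) ≤ cc ^ (n - 1) * (cc * cc⁻¹ ^ n) := h1
    _ ≤ Real.sqrt (cfq x n : ℝ) * (cc * cc⁻¹ ^ n) := by
        apply mul_le_mul_of_nonneg_right hs
        exact mul_nonneg cc_pos.le (pow_nonneg (inv_nonneg.mpr cc_pos.le) n)
    _ = cc * cc⁻¹ ^ n * Real.sqrt (cfq x n : ℝ) := mul_comm _ _
  
theorem bound_geom (hx : Irrational x) (n : ℕ) :
    (1 + 2 * Real.log 2 + Real.log (cfq x n : ℝ)) / (cfq x n : ℝ) ≤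
      ((3 + 2 * Real.log 2) * cc) * (cc⁻¹) ^ n := by
  set q := (cfq x n : ℝ) with hqdef
  have hq : 1 ≤ q := qR_pos hx n
  have hqpos : 0 < q := lt_of_lt_of_le one_pos hq
  set s := Real.sqrt q with hsdef
  have hs1 : 1 ≤ s := by
    rw [hsdef, show (1:ℝ) = Real.sqrt 1 by simp]
    exact Real.sqrt_le_sqrt hq
  have hspos : 0 < s := lt_of_lt_of_le one_pos hs1
  have hss : s * s = q := Real.mul_self_sqrt hqpos.le
  have hlog2 : 0 ≤ Real.log 2 := Real.log_nonneg one_le_two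
  have hlogq : Real.log q ≤ 2 * s := by
    have h1 : Real.log s = Real.log q / 2 := Real.log_sqrt hqpos.le
    have h2 : Real.log s ≤ s - 1 := Real.log_le_sub_one_of_pos hspos
    linarith
  have step1 : (1 + 2 * Real.log 2 + Real.log q) / q ≤ (3 + 2 * Real.log 2) / s := by
    rw [div_le_div_iff₀ hqpos hspos]
    have hlq0 : 0 ≤ Real.log q := Real.log_nonneg hq
    have hsq : s ≤ q := by nlinarith
    nlinarith [mul_le_mul_of_nonneg_right hlogq hspos.le]
  refine step1.trans ?_
  have h2 := inv_sqrtq_le hx n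
  calc (3 + 2 * Real.log 2) / s = (3 + 2 * Real.log 2) * (1 / s) := by ring
    _ ≤ (3 + 2 * Real.log 2) * (cc * (cc⁻¹) ^ n) := by
        apply mul_le_mul_of_nonneg_left h2 (by linarith)
    _ = ((3 + 2 * Real.log 2) * cc) * (cc⁻¹) ^ n := by ring

end Brj

open Brj

/-- There is a universal constant `C > 0` such that for every Brjuno number `x`,
`|B(x) - ∑_{n≥0} (log q_{n+1})/q_n| ≤ C`. -/
theorem stmt16 :
    ∃ C : ℝ, 0 < C ∧ ∀ x : ℝ, Irrational x → brjuno x ≠ ⊤ →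
      ∃ S : ℝ,
        HasSum (fun n : ℕ => Real.log (cfq x (n + 1) : ℝ) / (cfq x n : ℝ)) S ∧
        |(brjuno x).toReal - S| ≤ C := by
  set K : ℝ := (3 + 2 * Real.log 2) * cc with hKdef
  have hlog2 : 0 ≤ Real.log 2 := Real.log_nonneg one_le_two
  have hKpos : 0 < K := mul_pos (by linarith) cc_pos
  have hr0 : (0:ℝ) ≤ cc⁻¹ := inv_nonneg.mpr cc_pos.le
  have hr1 : cc⁻¹ < 1 := inv_lt_one_of_one_lt₀ cc_gt_one
  have hsumbnd : Summable (fun n : ℕ => K * cc⁻¹ ^ n) :=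
    (summable_geometric_of_lt_one hr0 hr1).mul_left K
  have htsumbnd : ∑' n : ℕ, K * cc⁻¹ ^ n = K * (1 - cc⁻¹)⁻¹ := by
    rw [tsum_mul_left, tsum_geometric_of_lt_one hr0 hr1]
  refine ⟨K * (1 - cc⁻¹)⁻¹, mul_pos hKpos (inv_pos.mpr (by linarith)), ?_⟩
  intro x hx hB
  have ht0 : ∀ n, 0 ≤ tfun x n := fun n =>
    mul_nonneg (bet_pos hx n).le
      (Real.log_nonneg ((one_le_div (g_pos hx n)).mpr (g_lt_one hx n).le))
  have hBrj : brjuno x = ∑' n, ENNReal.ofReal (tfun x n) := rfl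
  have hB' : (∑' n, ENNReal.ofReal (tfun x n)) ≠ ⊤ := hBrj ▸ hB
  have h2 : (fun n => (ENNReal.ofReal (tfun x n)).toReal) = tfun x :=
    funext fun n => ENNReal.toReal_ofReal (ht0 n)
  have hsummt : Summable (tfun x) := by
    have h1 := ENNReal.summable_toReal hB'
    rwa [h2] at h1
  have htoReal : (brjuno x).toReal = ∑' n, tfun x n := by
    rw [hBrj, ENNReal.tsum_toReal_eq (fun n => ENNReal.ofReal_ne_top), h2]
  have hd : ∀ n, |tfun x n - sfun x n| ≤ K * cc⁻¹ ^ n := fun n =>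
    (term_bound hx n).trans (bound_geom hx n)
  have hsum_abs : Summable (fun n => |tfun x n - sfun x n|) :=
    Summable.of_nonneg_of_le (fun n => abs_nonneg _) hd hsumbnd
  have hsum_diff : Summable (fun n => tfun x n - sfun x n) := hsum_abs.of_abs
  have hsum_s : Summable (sfun x) := by
    have h3 := hsummt.sub hsum_diff
    simpa using h3
  have hsum_norm : Summable (fun n => ‖tfun x n - sfun x n‖) := by
    simpa only [Real.norm_eq_abs] using hsum_abs
  have habs := norm_tsum_le_tsum_norm hsum_norm
  refine ⟨∑' n, sfun x n, hsum_s.hasSum, ?_⟩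
  rw [htoReal, ← hsummt.tsum_sub hsum_s]
  calc |∑' n, (tfun x n - sfun x n)| ≤ ∑' n, |tfun x n - sfun x n| := by
        simpa only [Real.norm_eq_abs] using habs
    _ ≤ ∑' n : ℕ, K * cc⁻¹ ^ n := hsum_abs.tsum_le_tsum hd hsumbnd
    _ = K * (1 - cc⁻¹)⁻¹ := htsumbnd
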